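/- If in a tiling of a flat torus by N convex polygons Q_i* each has perimeter at most P, the polygons cover the torus (so Σ Area(Q_i*) ≥ N·A where A is the area of the regular hexagon of perimeter P), the average number of sides satisfies (1/N)Σ nᵢ ≤ 6, and Area(Q_i*) ≤ A(nᵢ) where A(n) = P²cot(π/n)/(4n) (extended by 0 on [0,2]), then Σ A(nᵢ) ≤ N·A(6) = N·A, with equality forcing every nᵢ = 6. -/

import Mathlib

open Real Set

/-- The area of a regular Euclidean `n`-gon of perimeter `P`, extended by 0 on `[0,2]`. -/
noncomputable def Afun (P n : ℝ) : ℝ :=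
  if n ≤ 2 then 0 else P ^ 2 * (Real.cos (π / n) / Real.sin (π / n)) / (4 * n)

noncomputable def psi (t : ℝ) : ℝ := t ^ 2 * Real.cos t / Real.sin t

noncomputable def psi' (t : ℝ) : ℝ :=
  (2 * t * Real.cos t * Real.sin t - t ^ 2) / Real.sin t ^ 2

lemma hasDerivAt_psi {t : ℝ} (h : Real.sin t ≠ 0) : HasDerivAt psi (psi' t) t := by
  have h1 : HasDerivAt (fun t : ℝ => t ^ 2 * Real.cos t)
      (2 * t * Real.cos t + t ^ 2 * (-Real.sin t)) t := by
    simpa using ((hasDerivAt_pow 2 t).fun_mul (Real.hasDerivAt_cos t))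
  have h2 := h1.div (Real.hasDerivAt_sin t) h
  refine h2.congr_deriv ?_; symm
  have pyth := Real.sin_sq_add_cos_sq t
  unfold psi'
  field_simp
  linear_combination t ^ 2 * pyth

lemma hasDerivAt_psi' {t : ℝ} (h : Real.sin t ≠ 0) :
    HasDerivAt psi'
      (2 * (Real.sin t ^ 2 * Real.cos t - 2 * t * Real.sin t + t ^ 2 * Real.cos t)
        / Real.sin t ^ 3) t := by
  have h1 : HasDerivAt (fun t : ℝ => 2 * t * Real.cos t * Real.sin t - t ^ 2)
      ((2 * Real.cos t + 2 * t * (-Real.sin t)) * Real.sin t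
        + 2 * t * Real.cos t * Real.cos t - 2 * t) t := by
    have ha : HasDerivAt (fun t : ℝ => 2 * t * Real.cos t)
        (2 * Real.cos t + 2 * t * (-Real.sin t)) t := by
      simpa [mul_comm, mul_assoc, mul_left_comm] using
        (((hasDerivAt_id t).const_mul 2).fun_mul (Real.hasDerivAt_cos t))
    exact ((ha.mul (Real.hasDerivAt_sin t)).sub (by simpa using (hasDerivAt_pow 2 t)))
  have h2 : HasDerivAt (fun t : ℝ => Real.sin t ^ 2)
      (2 * Real.sin t * Real.cos t) t := by
    simpa [mul_comm, mul_assoc] using ((Real.hasDerivAt_sin t).fun_pow 2)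
  have h3 := h1.div h2 (pow_ne_zero 2 h)
  refine h3.congr_deriv ?_; symm
  have pyth := Real.sin_sq_add_cos_sq t
  field_simp
  linear_combination (t * Real.sin t) * pyth


lemma sin_ne_of_mem {t : ℝ} (ht : t ∈ Ioo 0 (π / 2)) : Real.sin t ≠ 0 :=
  ne_of_gt (Real.sin_pos_of_pos_of_lt_pi ht.1 (ht.2.trans (by linarith [Real.pi_pos])))

lemma hneg {t : ℝ} (ht : t ∈ Ioo 0 (π / 2)) :
    Real.sin t ^ 2 * Real.cos t - 2 * t * Real.sin t + t ^ 2 * Real.cos t < 0 := by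
  obtain ⟨h0, h2⟩ := ht
  have hs : 0 < Real.sin t := Real.sin_pos_of_pos_of_lt_pi h0 (by linarith [Real.pi_pos])
  have hc : 0 < Real.cos t := Real.cos_pos_of_mem_Ioo ⟨by linarith [Real.pi_pos], h2⟩
  have h3 : Real.sin t < t := Real.sin_lt h0
  have h4 : t < Real.tan t := Real.lt_tan h0 h2
  have h5 : t * Real.cos t < Real.sin t := by
    rw [Real.tan_eq_sin_div_cos, lt_div_iff₀ hc] at h4; linarith
  have hc1 : Real.cos t ≤ 1 := Real.cos_le_one t
  nlinarith [mul_pos h0 hs, mul_pos hs hc, mul_lt_mul_of_pos_left h3 hs,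
    mul_lt_mul_of_pos_left h5 h0, mul_lt_mul_of_pos_left h3 (mul_pos hs hc)]

lemma psi_concave : StrictConcaveOn ℝ (Ioo 0 (π / 2)) psi := by
  apply strictConcaveOn_of_deriv2_neg (convex_Ioo _ _)
  · intro t ht
    exact (hasDerivAt_psi (sin_ne_of_mem ht)).differentiableAt.continuousAt.continuousWithinAt
  · intro t ht
    rw [interior_Ioo] at ht
    have hne := sin_ne_of_mem ht
    have hU : IsOpen {y : ℝ | Real.sin y ≠ 0} :=
      isOpen_compl_singleton.preimage Real.continuous_sin
    have hev : deriv psi =ᶠ[nhds t] psi' := by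
      filter_upwards [hU.mem_nhds hne] with y hy using (hasDerivAt_psi hy).deriv
    have : deriv^[2] psi t = deriv (deriv psi) t := rfl
    rw [this, hev.deriv_eq, (hasDerivAt_psi' hne).deriv]
    apply div_neg_of_neg_of_pos
    · linarith [hneg ht]
    · exact pow_pos (Real.sin_pos_of_pos_of_lt_pi ht.1
        (ht.2.trans (by linarith [Real.pi_pos]))) 3

lemma pi6_mem : π / 6 ∈ Ioo 0 (π / 2) :=
  ⟨by positivity, by linarith [Real.pi_pos]⟩

lemma tangent {t : ℝ} (ht : t ∈ Ioo 0 (π / 2)) (hne : t ≠ π / 6) :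
    psi t < psi (π / 6) + psi' (π / 6) * (t - π / 6) := by
  have ha := pi6_mem
  have hda : HasDerivAt psi (psi' (π / 6)) (π / 6) := hasDerivAt_psi (sin_ne_of_mem ha)
  rcases hne.lt_or_gt with hlt | hlt
  · have h := psi_concave.lt_slope_of_hasDerivAt ht ha hlt hda
    rw [slope_def_field, lt_div_iff₀ (by linarith : (0:ℝ) < π / 6 - t)] at h
    linarith
  · have h := psi_concave.slope_lt_of_hasDerivAt ha ht hlt hda
    rw [slope_def_field, div_lt_iff₀ (by linarith : (0:ℝ) < t - π / 6)] at h
    linarith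




lemma psi_pi6 : psi (π / 6) = π ^ 2 * Real.sqrt 3 / 36 := by
  unfold psi; rw [Real.cos_pi_div_six, Real.sin_pi_div_six]; ring

lemma psi'_pi6 : psi' (π / 6) = π * Real.sqrt 3 / 3 - π ^ 2 / 9 := by
  unfold psi'; rw [Real.cos_pi_div_six, Real.sin_pi_div_six]; ring

lemma sqrt3_lt : Real.sqrt 3 < 1.8 := by
  rw [show (1.8:ℝ) = Real.sqrt (1.8^2) by rw [Real.sqrt_sq]; norm_num]
  exact Real.sqrt_lt_sqrt (by norm_num) (by norm_num)

lemma lt_sqrt3 : (1.7:ℝ) < Real.sqrt 3 := by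
  rw [show (1.7:ℝ) = Real.sqrt (1.7^2) by rw [Real.sqrt_sq]; norm_num]
  exact Real.sqrt_lt_sqrt (by norm_num) (by norm_num)

lemma key6 (P : ℝ) : Afun P 6 =
    P ^ 2 * (Real.sqrt 3 / 12 - π / 36) + P ^ 2 * (π / 216 - Real.sqrt 3 / 144) * 6 := by
  rw [Afun, if_neg (by norm_num), show π / 6 = π / 6 from rfl,
    Real.cos_pi_div_six, Real.sin_pi_div_six]
  ring

lemma key (P x : ℝ) (hP : 0 < P) (hx : 0 ≤ x) :
    Afun P x ≤ P ^ 2 * (Real.sqrt 3 / 12 - π / 36) + P ^ 2 * (π / 216 - Real.sqrt 3 / 144) * x ∧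
    (Afun P x = P ^ 2 * (Real.sqrt 3 / 12 - π / 36)
        + P ^ 2 * (π / 216 - Real.sqrt 3 / 144) * x → x = 6) := by
  have hpi1 := Real.pi_gt_d6
  have hpi2 := Real.pi_lt_d2
  have hs3l := lt_sqrt3
  have hs3u := sqrt3_lt
  have hP2 : (0:ℝ) < P ^ 2 := by positivity
  have hc0 : 0 < Real.sqrt 3 / 12 - π / 36 := by nlinarith
  have hc1 : 0 < π / 216 - Real.sqrt 3 / 144 := by nlinarith
  by_cases hx2 : x ≤ 2
  · have hA : Afun P x = 0 := if_pos hx2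
    have hL : 0 < P ^ 2 * (Real.sqrt 3 / 12 - π / 36)
        + P ^ 2 * (π / 216 - Real.sqrt 3 / 144) * x := by
      have := mul_nonneg (le_of_lt (mul_pos hP2 hc1)) hx
      nlinarith
    constructor
    · rw [hA]; linarith
    · intro h; rw [hA] at h; linarith
  · push_neg at hx2
    have hx0 : 0 < x := by linarith
    set t := π / x with htdef
    have ht0 : 0 < t := by positivity
    have htlt : t < π / 2 := div_lt_div_of_pos_left Real.pi_pos (by norm_num) hx2
    have ht : t ∈ Ioo 0 (π / 2) := ⟨ht0, htlt⟩
    have hsin : 0 < Real.sin t :=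
      Real.sin_pos_of_pos_of_lt_pi ht0 (by linarith [Real.pi_pos])
    have hxeq : x = π / t := by
      field_simp [htdef]
      rw [htdef]; field_simp
    have hA : Afun P x = P ^ 2 * psi t / (4 * π * t) := by
      rw [Afun, if_neg (not_le.mpr hx2), ← htdef]
      rw [hxeq]; unfold psi
      field_simp
    have hL : P ^ 2 * (Real.sqrt 3 / 12 - π / 36)
        + P ^ 2 * (π / 216 - Real.sqrt 3 / 144) * x
        = P ^ 2 * (psi (π / 6) + psi' (π / 6) * (t - π / 6)) / (4 * π * t) := by
      rw [hxeq, psi_pi6, psi'_pi6]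
      field_simp
      ring
    by_cases hx6 : x = 6
    · have ht6 : t = π / 6 := by rw [htdef, hx6]
      constructor
      · rw [hA, hL, ht6]; ring_nf; exact le_rfl
      · intro _; exact hx6
    · have ht6 : t ≠ π / 6 := by
        intro h
        apply hx6
        rw [hxeq, h]
        field_simp
      have hstrict := tangent ht ht6
      have hlt : Afun P x < P ^ 2 * (Real.sqrt 3 / 12 - π / 36)
          + P ^ 2 * (π / 216 - Real.sqrt 3 / 144) * x := by
        rw [hA, hL]
        have h4 : (0:ℝ) < 4 * π * t := by positivity
        exact (div_lt_div_iff_of_pos_right h4).mpr ((mul_lt_mul_iff_right₀ hP2).mpr hstrict)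
      exact ⟨hlt.le, fun h => absurd h hlt.ne⟩


lemma c1_pos' (P : ℝ) (hP : 0 < P) : 0 < P ^ 2 * (π / 216 - Real.sqrt 3 / 144) := by
  have hpi1 := Real.pi_gt_d6
  have hs3u := sqrt3_lt
  have hP2 : (0:ℝ) < P ^ 2 := by positivity
  nlinarith

theorem hexagon_area_bound (P : ℝ) (hP : 0 < P) (N : ℕ) (hN : 0 < N)
    (A : ℝ) (hA : A = Afun P 6)
    (nsides area : Fin N → ℝ) (hns : ∀ i, 0 ≤ nsides i)
    (hcover : (N : ℝ) * A ≤ ∑ i, area i)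
    (havg : (∑ i, nsides i) / N ≤ 6)
    (harea : ∀ i, area i ≤ Afun P (nsides i)) :
    ∑ i, Afun P (nsides i) ≤ N * Afun P 6 ∧ Afun P 6 = A ∧
    (∑ i, Afun P (nsides i) = N * Afun P 6 → ∀ i, nsides i = 6) := by
  set c0 : ℝ := P ^ 2 * (Real.sqrt 3 / 12 - π / 36) with hc0def
  set c1 : ℝ := P ^ 2 * (π / 216 - Real.sqrt 3 / 144) with hc1def
  have hc1 : 0 < c1 := c1_pos' P hP
  have hNpos : (0:ℝ) < N := Nat.cast_pos.mpr hN
  have hsum6 : ∑ i, nsides i ≤ 6 * N := by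
    rw [div_le_iff₀ hNpos] at havg; linarith
  have hkey : ∀ i, Afun P (nsides i) ≤ c0 + c1 * nsides i :=
    fun i => (key P (nsides i) hP (hns i)).1
  have hLsum : ∑ i, (c0 + c1 * nsides i) = N * c0 + c1 * ∑ i, nsides i := by
    rw [Finset.sum_add_distrib, Finset.sum_const, Finset.card_univ, Fintype.card_fin,
      nsmul_eq_mul, ← Finset.mul_sum]
  have hLle : ∑ i, (c0 + c1 * nsides i) ≤ N * Afun P 6 := by
    rw [hLsum, key6 P, ← hc0def, ← hc1def]
    have := mul_le_mul_of_nonneg_left hsum6 hc1.le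
    nlinarith
  have h1 : ∑ i, Afun P (nsides i) ≤ N * Afun P 6 :=
    le_trans (Finset.sum_le_sum fun i _ => hkey i) hLle
  refine ⟨h1, hA.symm, ?_⟩
  intro hsum i
  by_contra hne6
  have hstrict : Afun P (nsides i) < c0 + c1 * nsides i :=
    lt_of_le_of_ne (hkey i) fun h => hne6 ((key P (nsides i) hP (hns i)).2 h)
  have : ∑ j, Afun P (nsides j) < ∑ j, (c0 + c1 * nsides j) :=
    Finset.sum_lt_sum (fun j _ => hkey j) ⟨i, Finset.mem_univ i, hstrict⟩
  linarith [hLle]
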